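/- For real numbers x with 2/3 ≤ x ≤ 1, g(x) = −5/24 + x³/6 + ((1−x)x/6)·max(5−5x, 10x−7) ≤ −1/24, with maximum attained at x = 1. -/
import Mathlib

theorem g_hone_bound :
    (∀ x : ℝ, 2/3 ≤ x → x ≤ 1 →
      -5/24 + x^3/6 + ((1 - x) * x / 6) * max (5 - 5*x) (10*x - 7) ≤ -1/24) ∧
    (-5/24 + (1:ℝ)^3/6 + ((1 - 1) * 1 / 6) * max (5 - 5*1) (10*1 - 7) = -1/24) := by
  constructor
  · intro x h1 h2
    rcases le_total (5 - 5*x) (10*x - 7) with h | h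
    · rw [max_eq_right h]
      nlinarith [sq_nonneg (x - 1), sq_nonneg (x - 4/5), sq_nonneg x, mul_nonneg (sub_nonneg.2 h2) (sq_nonneg (x - 4/5))]
    · rw [max_eq_left h]
      nlinarith [sq_nonneg (x - 1), mul_nonneg (sub_nonneg.2 h2) (sq_nonneg (x - 1/2)), sq_nonneg (x - 2/3)]
  · norm_num
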